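/- If G is a finite simple graph with m edges that is not a linear forest, then c₂(G) ≤ m − 1. -/

import Mathlib

open Matrix

/-- A subgraph complementation system for `G`: a finite collection (multiset) of subsets of
vertices such that two distinct vertices are adjacent iff they lie together in an odd
number of the sets. -/
def IsSCS {V : Type*} [DecidableEq V] (G : SimpleGraph V) (𝒞 : Multiset (Finset V)) : Prop :=
  ∀ u v : V, u ≠ v →
    (G.Adj u v ↔ Odd (Multiset.card (𝒞.filter (fun C => u ∈ C ∧ v ∈ C))))

/-- The subgraph complementation number `c₂(G)`: the minimum cardinality of a subgraph
complementation system for `G`. -/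
noncomputable def c2 {V : Type*} [DecidableEq V] (G : SimpleGraph V) : ℕ :=
  sInf {k | ∃ 𝒞 : Multiset (Finset V), IsSCS G 𝒞 ∧ Multiset.card 𝒞 = k}

/-- A symmetric matrix over `F₂` fits `G` if its off-diagonal entries record adjacency. -/
def FitsF2 {V : Type*} (G : SimpleGraph V) (A : Matrix V V (ZMod 2)) : Prop :=
  A.IsSymm ∧ ∀ u v : V, u ≠ v → (A u v = 1 ↔ G.Adj u v)

/-- The minimum rank of `G` over `F₂`: the minimum rank of a symmetric matrix over `F₂`
that fits `G`. -/
noncomputable def mrF2 {V : Type*} [Fintype V] (G : SimpleGraph V) : ℕ :=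
  sInf {k | ∃ A : Matrix V V (ZMod 2), FitsF2 G A ∧ A.rank = k}

/-- A linear forest: an acyclic graph in which every vertex has degree at most 2,
i.e. every connected component is a path. -/
def IsLinearForest {V : Type*} (G : SimpleGraph V) : Prop :=
  G.IsAcyclic ∧ ∀ v : V, (G.neighborSet v).ncard ≤ 2

namespace SCSAux
set_option linter.unusedSectionVars false

variable {V : Type*} [DecidableEq V]

def s2f : Sym2 V → Finset V := Sym2.lift ⟨fun a b => {a, b}, fun a b => Finset.pair_comm a b⟩

@[simp] lemma s2f_mk (a b : V) : s2f s(a, b) = {a, b} := rfl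

lemma pair_mem_s2f {u w : V} (huw : u ≠ w) (e : Sym2 V) :
    (u ∈ s2f e ∧ w ∈ s2f e) ↔ e = s(u, w) := by
  induction e with
  | _ a b =>
    simp only [s2f_mk, Finset.mem_insert, Finset.mem_singleton, Sym2.eq_iff]
    constructor
    · rintro ⟨(rfl | rfl), (rfl | rfl)⟩ <;> tauto
    · rintro (⟨rfl, rfl⟩ | ⟨rfl, rfl⟩) <;> tauto

def pairsOf (S : Finset (Sym2 V)) : Multiset (Finset V) := S.val.map s2f

lemma card_pairsOf (S : Finset (Sym2 V)) : Multiset.card (pairsOf S) = S.card := by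
  rw [pairsOf, Multiset.card_map]; rfl

lemma countP_pairsOf (S : Finset (Sym2 V)) {u w : V} (huw : u ≠ w) :
    Multiset.countP (fun C => u ∈ C ∧ w ∈ C) (pairsOf S)
      = if s(u, w) ∈ S then 1 else 0 := by
  rw [pairsOf, Multiset.countP_map,
    show Multiset.filter (fun a => u ∈ s2f a ∧ w ∈ s2f a) S.val
      = Multiset.filter (fun a => s(u,w) = a) S.val from
      Multiset.filter_congr (fun e _ => by rw [pair_mem_s2f huw e, eq_comm]),
    ← Multiset.countP_eq_card_filter, ← Multiset.count]
  by_cases h : s(u,w) ∈ S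
  · rw [if_pos h]; exact Multiset.count_eq_one_of_mem S.nodup h
  · rw [if_neg h]; exact Multiset.count_eq_zero_of_notMem (by simpa using h)

def triples (x : V) : List V → Multiset (Finset V)
  | a :: b :: l => {x, a, b} ::ₘ triples x (b :: l)
  | _ => 0

@[simp] lemma triples_nil (x : V) : triples x [] = 0 := rfl
@[simp] lemma triples_single (x a : V) : triples x [a] = 0 := rfl
@[simp] lemma triples_cons₂ (x a b : V) (l : List V) :
    triples x (a :: b :: l) = {x, a, b} ::ₘ triples x (b :: l) := rfl

lemma card_triples (x : V) : ∀ l : List V, Multiset.card (triples x l) = l.length - 1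
  | [] => rfl
  | [a] => rfl
  | a :: b :: l => by
    rw [triples_cons₂, Multiset.card_cons, card_triples x (b :: l)]
    simp [Nat.sub_add_cancel]

def chainEdges : List V → List (Sym2 V)
  | a :: b :: l => s(a, b) :: chainEdges (b :: l)
  | _ => []

@[simp] lemma chainEdges_nil : chainEdges ([] : List V) = [] := rfl
@[simp] lemma chainEdges_single (a : V) : chainEdges [a] = [] := rfl
@[simp] lemma chainEdges_cons₂ (a b : V) (l : List V) :
    chainEdges (a :: b :: l) = s(a, b) :: chainEdges (b :: l) := rfl

lemma mem_of_mem_chainEdges : ∀ {m : List V} {e : Sym2 V}, e ∈ chainEdges m →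
    ∀ y ∈ e, y ∈ m
  | [], e, he => by simp at he
  | [a], e, he => by simp at he
  | a :: b :: l, e, he => by
    rw [chainEdges_cons₂, List.mem_cons] at he
    rcases he with rfl | he
    · intro y hy
      rw [Sym2.mem_iff] at hy
      rcases hy with rfl | rfl <;> simp
    · intro y hy
      exact List.mem_cons_of_mem _ (mem_of_mem_chainEdges he y hy)

lemma chainEdges_nodup : ∀ {m : List V}, m.Nodup → (chainEdges m).Nodup
  | [], _ => List.nodup_nil
  | [a], _ => List.nodup_nil
  | a :: b :: l, h => by
    rw [chainEdges_cons₂, List.nodup_cons]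
    refine ⟨fun hmem => ?_, chainEdges_nodup (List.Nodup.of_cons h)⟩
    exact (List.nodup_cons.mp h).1 (mem_of_mem_chainEdges hmem a (by simp))

lemma chainEdges_subset {G : SimpleGraph V} :
    ∀ {a : V} {l : List V}, List.Chain G.Adj a l → ∀ e ∈ chainEdges (a :: l), e ∈ G.edgeSet
  | a, [], _, e, he => by simp at he
  | a, b :: l, h, e, he => by
    rw [chainEdges_cons₂, List.mem_cons] at he
    replace h := List.chain_cons.mp h
    rcases he with rfl | he
    · exact h.1
    · rcases l with _ | ⟨c, l⟩
      · simp at he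
      · exact chainEdges_subset h.2 e he

lemma length_chainEdges : ∀ m : List V, (chainEdges m).length = m.length - 1
  | [] => rfl
  | [a] => rfl
  | a :: b :: l => by
    rw [chainEdges_cons₂, List.length_cons, length_chainEdges (b :: l)]
    simp [Nat.sub_add_cancel]

lemma getLastD_mem : ∀ (l : List V) (d : V), l ≠ [] → l.getLastD d ∈ l
  | [a], d, _ => by simp
  | a :: b :: m, d, _ => by
      rw [List.getLastD_cons]
      exact List.mem_cons_of_mem _ (getLastD_mem (b :: m) a (by simp))

def cycEdges (x : V) (l : List V) : List (Sym2 V) :=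
  chainEdges (x :: l) ++ [s(l.getLastD x, x)]

lemma length_cycEdges (x : V) (l : List V) (hl : l ≠ []) :
    (cycEdges x l).length = l.length + 1 := by
  rw [cycEdges, List.length_append, length_chainEdges, List.length_singleton,
    List.length_cons, Nat.add_sub_cancel]

lemma cycEdges_subset {G : SimpleGraph V} {x : V} {l : List V}
    (hch : List.Chain G.Adj x l) (hcl : G.Adj (l.getLastD x) x) :
    ∀ e ∈ cycEdges x l, e ∈ G.edgeSet := by
  intro e he
  rw [cycEdges, List.mem_append, List.mem_singleton] at he
  rcases he with he | rfl
  · exact chainEdges_subset hch e he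
  · exact hcl

lemma cycEdges_nodup {x : V} {l : List V} (h2 : 2 ≤ l.length) (hnd : (x :: l).Nodup) :
    (cycEdges x l).Nodup := by
  have hx : x ∉ l := (List.nodup_cons.mp hnd).1
  have hl : l.Nodup := (List.nodup_cons.mp hnd).2
  rw [cycEdges, List.nodup_append]
  refine ⟨chainEdges_nodup hnd, List.nodup_singleton _, ?_⟩
  intro e he
  rcases l with _ | ⟨a, t⟩
  · simp at h2
  rcases t with _ | ⟨b, t⟩
  · simp at h2
  have hLmem : (a :: b :: t).getLastD x ∈ a :: b :: t := getLastD_mem _ _ (by simp)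
  rw [chainEdges_cons₂, List.mem_cons] at he
  simp only [List.mem_singleton, forall_eq, ne_eq]
  rcases he with rfl | he
  · rw [Sym2.eq_iff]
    rintro (⟨h1, h2'⟩ | ⟨h1, h2'⟩)
    · exact hx (by rw [h1]; exact hLmem)
    · rw [List.getLastD_cons] at h2'
      have h3 : (b :: t).getLastD a ∈ b :: t := getLastD_mem _ _ (by simp)
      exact (List.nodup_cons.mp hl).1 (by rw [h2']; exact h3)
  · intro hc
    have := mem_of_mem_chainEdges (hc ▸ he) x (by rw [Sym2.mem_iff]; tauto)
    exact hx this

lemma countT_of_ne {u w x : V} (hux : u ≠ x) (hwx : w ≠ x) (huw : u ≠ w) :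
    ∀ l : List V, Multiset.countP (fun C => u ∈ C ∧ w ∈ C) (triples x l)
      = (chainEdges l).count s(u, w)
  | [] => rfl
  | [a] => rfl
  | a :: b :: l => by
    rw [triples_cons₂, Multiset.countP_cons, countT_of_ne hux hwx huw (b :: l),
      chainEdges_cons₂, List.count_cons]
    congr 1
    have hmem : (u ∈ ({x, a, b} : Finset V) ∧ w ∈ ({x, a, b} : Finset V)) ↔
        ((u = a ∨ u = b) ∧ (w = a ∨ w = b)) := by
      simp [hux, hwx]
    have : ((u = a ∨ u = b) ∧ (w = a ∨ w = b)) ↔ s(a, b) = s(u, w) := by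
      rw [Sym2.eq_iff]
      constructor
      · rintro ⟨(rfl | rfl), (rfl | rfl)⟩ <;> tauto
      · rintro (⟨rfl, rfl⟩ | ⟨rfl, rfl⟩) <;> tauto
    by_cases h : s(a, b) = s(u, w)
    · rw [if_pos (hmem.mpr (this.mpr h)), if_pos (by simpa using h)]
    · rw [if_neg (fun hc => h (this.mp (hmem.mp hc))), if_neg (by simpa using h)]

lemma countT_x {w : V} (x : V) : ∀ l : List V, 2 ≤ l.length → l.Nodup → x ∉ l → w ≠ x →
    (Odd (Multiset.countP (fun C => x ∈ C ∧ w ∈ C) (triples x l)) ↔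
      (w = l.headD x ∨ w = l.getLastD x))
  | [], h, _, _, _ => by simp at h
  | [a], h, _, _, _ => by simp at h
  | [a, b], _, hnd, hx, hwx => by
    have hmm : (x ∈ ({x, a, b} : Finset V) ∧ w ∈ ({x, a, b} : Finset V)) ↔ (w = a ∨ w = b) := by
      simp [hwx]
    simp only [triples_cons₂, triples_single, Multiset.countP_cons, Multiset.countP_zero,
      Nat.zero_add, List.headD_cons, List.getLastD_cons, List.getLastD_nil]
    rw [if_congr hmm rfl rfl]
    by_cases h : w = a ∨ w = b <;> simp [h]
  | a :: b :: c :: m, _, hnd, hx, hwx => by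
    have hx' : x ∉ b :: c :: m := fun hc => hx (List.mem_cons_of_mem _ hc)
    have IH := countT_x x (b :: c :: m) (by simp) hnd.of_cons hx' hwx
    rw [triples_cons₂, Multiset.countP_cons]
    have hhead : (x ∈ ({x, a, b} : Finset V) ∧ w ∈ ({x, a, b} : Finset V)) ↔
        (w = a ∨ w = b) := by simp [hwx]
    -- distinctness facts
    obtain ⟨L, hL⟩ : ∃ L, (c :: m).getLastD b = L := ⟨_, rfl⟩
    have hgl : (b :: c :: m).getLastD x = L := by rw [List.getLastD_cons, hL]
    have hgl2 : (a :: b :: c :: m).getLastD x = L := by rw [List.getLastD_cons, List.getLastD_cons, hL]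
    have hLmem : L ∈ c :: m := hL ▸ getLastD_mem _ _ (by simp)
    have haL : a ≠ L := by
      intro hc; subst hc
      exact (List.nodup_cons.mp hnd).1 (List.mem_cons_of_mem _ hLmem)
    have hbL : b ≠ L := by
      intro hc; subst hc
      exact (List.nodup_cons.mp hnd.of_cons).1 hLmem
    have hab : a ≠ b := by
      intro hc; subst hc
      exact (List.nodup_cons.mp hnd).1 (by simp)
    rw [Nat.odd_add, IH, hgl2]
    simp only [List.headD_cons, hgl]
    by_cases hP : w = a <;> by_cases hQ : w = b <;> by_cases hR : w = L <;>
      simp_all [Nat.even_iff, Nat.odd_iff] <;> omega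


lemma mem_cycEdges_of_ne {x u w : V} {l : List V} (hl : l ≠ []) (hux : u ≠ x) (hwx : w ≠ x) :
    (s(u, w) ∈ cycEdges x l ↔ s(u, w) ∈ chainEdges l) := by
  rcases l with _ | ⟨a, t⟩
  · simp at hl
  rw [cycEdges, List.mem_append, List.mem_singleton, chainEdges_cons₂, List.mem_cons]
  constructor
  · rintro ((h | h) | h)
    · rw [Sym2.eq_iff] at h
      rcases h with ⟨rfl, rfl⟩ | ⟨rfl, rfl⟩ <;> simp_all
    · exact h
    · rw [Sym2.eq_iff] at h
      rcases h with ⟨rfl, rfl⟩ | ⟨rfl, rfl⟩ <;> simp_all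
  · intro h
    exact Or.inl (Or.inr h)

lemma mem_cycEdges_x {x w : V} {l : List V} (hl : l ≠ []) (hx : x ∉ l) (hwx : w ≠ x) :
    (s(x, w) ∈ cycEdges x l ↔ (w = l.headD x ∨ w = l.getLastD x)) := by
  rcases l with _ | ⟨a, t⟩
  · simp at hl
  rw [cycEdges, List.mem_append, List.mem_singleton, chainEdges_cons₂, List.mem_cons]
  have hxa : x ≠ a := fun hc => hx (by rw [hc]; simp)
  constructor
  · rintro ((h | h) | h)
    · rw [Sym2.eq_iff] at h
      rcases h with ⟨-, rfl⟩ | ⟨h1, rfl⟩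
      · simp
      · exact absurd rfl hwx
    · have := mem_of_mem_chainEdges h x (by rw [Sym2.mem_iff]; tauto)
      exact absurd this hx
    · rw [Sym2.eq_iff] at h
      rcases h with ⟨h1, rfl⟩ | ⟨-, h2⟩
      · exact absurd rfl hwx
      · exact Or.inr h2
  · rintro (h | h)
    · simp only [List.headD_cons] at h
      exact Or.inl (Or.inl (by rw [h]))
    · exact Or.inr (by rw [h, Sym2.eq_swap])

lemma odd_countT_iff {x u w : V} {l : List V} (h2 : 2 ≤ l.length)
    (hnd : (x :: l).Nodup) (huw : u ≠ w) :
    (Odd (Multiset.countP (fun C => u ∈ C ∧ w ∈ C) (triples x l)) ↔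
      s(u, w) ∈ cycEdges x l) := by
  have hx : x ∉ l := (List.nodup_cons.mp hnd).1
  have hl : l.Nodup := (List.nodup_cons.mp hnd).2
  have hlne : l ≠ [] := by rintro rfl; simp at h2
  by_cases hux : u = x
  · subst hux
    rw [countT_x u l h2 hl hx (Ne.symm huw), ← mem_cycEdges_x hlne hx (Ne.symm huw)]
  · by_cases hwx : w = x
    · subst hwx
      rw [Multiset.countP_congr rfl (fun C _ => by
        show (u ∈ C ∧ w ∈ C) = (w ∈ C ∧ u ∈ C); rw [and_comm]),
        show s(u, w) = s(w, u) from Sym2.eq_swap,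
        countT_x w l h2 hl hx hux, ← mem_cycEdges_x hlne hx hux]
    · rw [countT_of_ne hux hwx huw l, mem_cycEdges_of_ne hlne hux hwx]
      constructor
      · intro hodd
        by_contra hmem
        rw [List.count_eq_zero_of_not_mem hmem] at hodd
        simp at hodd
      · intro hmem
        rw [List.count_eq_one_of_mem (chainEdges_nodup hl) hmem]
        simp

lemma card_filter_add (A B : Multiset (Finset V)) (p : Finset V → Prop) [DecidablePred p] :
    Multiset.card ((A + B).filter p) = Multiset.countP p A + Multiset.countP p B := by
  rw [Multiset.filter_add, Multiset.card_add, Multiset.countP_eq_card_filter,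
    Multiset.countP_eq_card_filter]

lemma chain_concat_split {R : V → V → Prop} : ∀ {a : V} {l : List V} {b : V},
    List.Chain R a (l ++ [b]) → List.Chain R a l ∧ R (l.getLastD a) b
  | a, [], b, h => by
    rw [List.nil_append] at h
    replace h := List.chain_cons.mp h
    exact ⟨List.Chain.nil, h.1⟩
  | a, c :: l, b, h => by
    rw [List.cons_append] at h
    replace h := List.chain_cons.mp h
    obtain ⟨hac, h'⟩ := h
    obtain ⟨hc, hr⟩ := chain_concat_split h'
    exact ⟨List.chain_cons.mpr ⟨hac, hc⟩, by rwa [List.getLastD_cons]⟩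

lemma cycle_case {G : SimpleGraph V} [Fintype V] {x : V} {l : List V}
    (h2 : 2 ≤ l.length) (hnd : (x :: l).Nodup)
    (hch : List.Chain G.Adj x l) (hcl : G.Adj (l.getLastD x) x) :
    c2 G ≤ G.edgeSet.ncard - 1 := by
  classical
  have hfin : G.edgeSet.Finite := Set.toFinite _
  set E := hfin.toFinset with hE
  set F := (cycEdges x l).toFinset with hF
  have hlne : l ≠ [] := by rintro rfl; simp at h2
  have hFE : F ⊆ E := by
    intro e he
    rw [hF, List.mem_toFinset] at he
    rw [hE, Set.Finite.mem_toFinset]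
    exact cycEdges_subset hch hcl e he
  have hFcard : F.card = l.length + 1 := by
    rw [hF, List.card_toFinset, (cycEdges_nodup h2 hnd).dedup, length_cycEdges x l hlne]
  have hscs : IsSCS G (triples x l + pairsOf (E \ F)) := by
    intro u w huw
    rw [card_filter_add, countP_pairsOf _ huw]
    by_cases hcyc : s(u, w) ∈ cycEdges x l
    · have hodd := (odd_countT_iff h2 hnd huw).mpr hcyc
      have hadj : G.Adj u w := (SimpleGraph.mem_edgeSet G).mp (cycEdges_subset hch hcl _ hcyc)
      have hnotin : s(u, w) ∉ E \ F := by
        rw [Finset.mem_sdiff]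
        rintro ⟨-, hc⟩
        exact hc (by rw [hF, List.mem_toFinset]; exact hcyc)
      rw [if_neg hnotin]
      exact iff_of_true hadj (by simpa using hodd)
    · have heven : Even (Multiset.countP (fun C => u ∈ C ∧ w ∈ C) (triples x l)) := by
        rw [← Nat.not_odd_iff_even]
        exact fun hc => hcyc ((odd_countT_iff h2 hnd huw).mp hc)
      have hnF : s(u, w) ∉ F := by rw [hF, List.mem_toFinset]; exact hcyc
      by_cases hadj : G.Adj u w
      · rw [if_pos (Finset.mem_sdiff.mpr ⟨by rw [hE, Set.Finite.mem_toFinset]; exact hadj, hnF⟩)]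
        exact iff_of_true hadj heven.add_one
      · rw [if_neg (fun hc => hadj (by
          have := (Finset.mem_sdiff.mp hc).1
          rw [hE, Set.Finite.mem_toFinset] at this
          exact this))]
        refine iff_of_false hadj ?_
        rw [Nat.add_zero, Nat.not_odd_iff_even]
        exact heven
  have hcard : Multiset.card (triples x l + pairsOf (E \ F))
      = (l.length - 1) + (E.card - (l.length + 1)) := by
    rw [Multiset.card_add, card_triples, card_pairsOf, Finset.card_sdiff_of_subset hFE, hFcard]
  have hm : l.length + 1 ≤ E.card := hFcard ▸ Finset.card_le_card hFE
  have hnc : G.edgeSet.ncard = E.card := Set.ncard_eq_toFinset_card _ hfin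
  have hle : c2 G ≤ (l.length - 1) + (E.card - (l.length + 1)) :=
    Nat.sInf_le ⟨_, hscs, hcard⟩
  omega

lemma star_case {G : SimpleGraph V} [Fintype V] {v a b c : V}
    (hva : G.Adj v a) (hvb : G.Adj v b) (hvc : G.Adj v c)
    (hab : a ≠ b) (hac : a ≠ c) (hbc : b ≠ c) :
    c2 G ≤ G.edgeSet.ncard - 1 := by
  classical
  have hfin : G.edgeSet.Finite := Set.toFinite _
  set E := hfin.toFinset with hE
  set B : Finset V := {a, b, c} with hB
  set A : Finset V := insert v B with hA
  set F : Finset (Sym2 V) := {s(v,a), s(v,b), s(v,c)} with hF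
  set D : Multiset (Finset V) := A ::ₘ B ::ₘ 0 with hD
  have hva' : v ≠ a := hva.ne
  have hvb' : v ≠ b := hvb.ne
  have hvc' : v ≠ c := hvc.ne
  have hvB : v ∉ B := by simp [hB, hva', hvb', hvc']
  have hBm : ∀ z : V, z ∈ B ↔ (z = a ∨ z = b ∨ z = c) := by intro z; simp [hB]
  have hEiff : ∀ p q : V, s(p,q) ∈ E ↔ G.Adj p q := fun p q => by
    rw [hE, Set.Finite.mem_toFinset, SimpleGraph.mem_edgeSet]
  have hFiff : ∀ u w : V, s(u,w) ∈ F ↔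
      ((u = v ∧ w ∈ B) ∨ (w = v ∧ u ∈ B)) := by
    intro u w
    simp only [hF, Finset.mem_insert, Finset.mem_singleton, Sym2.eq_iff, hBm]
    tauto
  have hAdjB : ∀ z : V, z ∈ B → G.Adj v z := by
    intro z hz
    rcases (hBm z).mp hz with rfl | rfl | rfl <;> assumption
  have hFE : F ⊆ E := by
    intro e he
    rw [hF] at he
    simp only [Finset.mem_insert, Finset.mem_singleton] at he
    rcases he with rfl | rfl | rfl <;> rw [hE, Set.Finite.mem_toFinset] <;> assumption
  have hFcard : F.card = 3 := by
    rw [hF]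
    rw [Finset.card_insert_of_notMem (by simp [Sym2.eq_iff, hab, hac, hva', hvb', hvc']),
      Finset.card_insert_of_notMem (by simp [Sym2.eq_iff, hbc, hvb', hvc']),
      Finset.card_singleton]
  have hscs : IsSCS G (D + pairsOf (E \ F)) := by
    intro u w huw
    rw [card_filter_add, countP_pairsOf _ huw]
    have hcD : Multiset.countP (fun C => u ∈ C ∧ w ∈ C) D
        = (if u ∈ B ∧ w ∈ B then 1 else 0) + (if u ∈ A ∧ w ∈ A then 1 else 0) := by
      rw [hD, Multiset.countP_cons, Multiset.countP_cons, Multiset.countP_zero, Nat.zero_add]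
    rw [hcD]
    by_cases huB : u ∈ B <;> by_cases hwB : w ∈ B
    · -- both in B
      have huv : u ≠ v := fun h => hvB (h ▸ huB)
      have hwv : w ≠ v := fun h => hvB (h ▸ hwB)
      have hsF : s(u,w) ∉ F := by rw [hFiff]; tauto
      rw [if_pos ⟨huB, hwB⟩, if_pos ⟨by rw [hA]; exact Finset.mem_insert_of_mem huB,
        by rw [hA]; exact Finset.mem_insert_of_mem hwB⟩]
      by_cases hadj : G.Adj u w
      · rw [if_pos (Finset.mem_sdiff.mpr ⟨(hEiff u w).mpr hadj, hsF⟩)]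
        exact iff_of_true hadj (by simp [Nat.odd_iff])
      · rw [if_neg (fun hc => hadj ((hEiff u w).mp (Finset.mem_sdiff.mp hc).1))]
        exact iff_of_false hadj (by simp [Nat.odd_iff])
    · -- u ∈ B, w ∉ B
      by_cases hwv : w = v
      · subst hwv
        rw [if_neg (fun hc => hwB hc.2), if_pos ⟨by rw [hA]; exact Finset.mem_insert_of_mem huB,
          by rw [hA]; exact Finset.mem_insert_self _ _⟩]
        have hsF : s(u,w) ∈ F := (hFiff u w).mpr (Or.inr ⟨rfl, huB⟩)
        rw [if_neg (fun hc => (Finset.mem_sdiff.mp hc).2 hsF)]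
        exact iff_of_true ((hAdjB u huB).symm) (by simp [Nat.odd_iff])
      · have hwA : w ∉ A := by rw [hA]; simp [hwv, hwB]
        have huv : u ≠ v := fun h => hvB (h ▸ huB)
        have hsF : s(u,w) ∉ F := by rw [hFiff]; tauto
        rw [if_neg (fun hc => hwB hc.2), if_neg (fun hc => hwA hc.2)]
        by_cases hadj : G.Adj u w
        · rw [if_pos (Finset.mem_sdiff.mpr ⟨(hEiff u w).mpr hadj, hsF⟩)]
          exact iff_of_true hadj (by simp [Nat.odd_iff])
        · rw [if_neg (fun hc => hadj ((hEiff u w).mp (Finset.mem_sdiff.mp hc).1))]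
          exact iff_of_false hadj (by simp [Nat.odd_iff])
    · -- u ∉ B, w ∈ B
      by_cases huv : u = v
      · subst huv
        rw [if_neg (fun hc => huB hc.1), if_pos ⟨by rw [hA]; exact Finset.mem_insert_self _ _,
          by rw [hA]; exact Finset.mem_insert_of_mem hwB⟩]
        have hsF : s(u,w) ∈ F := (hFiff u w).mpr (Or.inl ⟨rfl, hwB⟩)
        rw [if_neg (fun hc => (Finset.mem_sdiff.mp hc).2 hsF)]
        exact iff_of_true (hAdjB w hwB) (by simp [Nat.odd_iff])
      · have huA : u ∉ A := by rw [hA]; simp [huv, huB]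
        have hwv : w ≠ v := fun h => hvB (h ▸ hwB)
        have hsF : s(u,w) ∉ F := by rw [hFiff]; tauto
        rw [if_neg (fun hc => huB hc.1), if_neg (fun hc => huA hc.1)]
        by_cases hadj : G.Adj u w
        · rw [if_pos (Finset.mem_sdiff.mpr ⟨(hEiff u w).mpr hadj, hsF⟩)]
          exact iff_of_true hadj (by simp [Nat.odd_iff])
        · rw [if_neg (fun hc => hadj ((hEiff u w).mp (Finset.mem_sdiff.mp hc).1))]
          exact iff_of_false hadj (by simp [Nat.odd_iff])
    · -- neither in B
      have hsF : s(u,w) ∉ F := by rw [hFiff]; tauto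
      have hnand : ¬ (u ∈ A ∧ w ∈ A) := by
        rw [hA]
        rintro ⟨hu, hw⟩
        simp only [Finset.mem_insert] at hu hw
        rcases hu with rfl | hu
        · rcases hw with rfl | hw
          · exact huw rfl
          · exact hwB hw
        · exact huB hu
      rw [if_neg (fun hc => huB hc.1), if_neg hnand]
      by_cases hadj : G.Adj u w
      · rw [if_pos (Finset.mem_sdiff.mpr ⟨(hEiff u w).mpr hadj, hsF⟩)]
        exact iff_of_true hadj (by simp [Nat.odd_iff])
      · rw [if_neg (fun hc => hadj ((hEiff u w).mp (Finset.mem_sdiff.mp hc).1))]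
        exact iff_of_false hadj (by simp [Nat.odd_iff])
  have hcard : Multiset.card (D + pairsOf (E \ F)) = 2 + (E.card - 3) := by
    rw [Multiset.card_add, card_pairsOf, Finset.card_sdiff_of_subset hFE, hFcard, hD]
    rfl
  have hm : 3 ≤ E.card := hFcard ▸ Finset.card_le_card hFE
  have hnc : G.edgeSet.ncard = E.card := Set.ncard_eq_toFinset_card _ hfin
  have hle : c2 G ≤ 2 + (E.card - 3) := Nat.sInf_le ⟨_, hscs, hcard⟩
  omega

end SCSAux

theorem stmt1 {V : Type*} [Fintype V] [DecidableEq V] (G : SimpleGraph V)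
    (h : ¬ IsLinearForest G) :
    c2 G ≤ G.edgeSet.ncard - 1 := by
  classical
  rw [IsLinearForest, not_and_or] at h
  rcases h with h | h
  · -- there is a cycle
    rw [SimpleGraph.IsAcyclic] at h
    push_neg at h
    obtain ⟨v, p, hp⟩ := h
    have h3 : 3 ≤ p.length := hp.three_le_length
    have hlen : p.support.tail.length = p.length := by
      rw [List.length_tail, SimpleGraph.Walk.length_support]; omega
    have htne : p.support.tail ≠ [] := by
      intro hc; rw [hc] at hlen; simp at hlen; omega
    obtain ⟨l, hsupp⟩ : ∃ l, p.support.tail = l ++ [v] := by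
      refine ⟨p.support.tail.dropLast, ?_⟩
      conv_lhs => rw [← List.dropLast_append_getLast htne]
      congr 1
      rw [(List.getLast_tail htne).trans p.getLast_support]
    have h2 : 2 ≤ l.length := by
      have : l.length + 1 = p.length := by
        rw [← hlen, hsupp, List.length_append, List.length_singleton]
      omega
    have hnd : (v :: l).Nodup := by
      have := hp.support_nodup
      rw [hsupp, List.nodup_append] at this
      exact List.nodup_cons.mpr ⟨fun hv => this.2.2 v hv v (by simp) rfl, this.1⟩
    have hchain : List.Chain G.Adj v (l ++ [v]) := by
      have := p.isChain_adj_support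
      rw [p.support_eq_cons, hsupp] at this
      exact this
    obtain ⟨hch, hcl⟩ := SCSAux.chain_concat_split hchain
    exact SCSAux.cycle_case h2 hnd hch hcl
  · -- a vertex of degree ≥ 3
    push_neg at h
    obtain ⟨v, hv⟩ := h
    have hfin : (G.neighborSet v).Finite := Set.toFinite _
    have hcard : 3 ≤ hfin.toFinset.card := by
      rw [← Set.ncard_eq_toFinset_card _ hfin]; omega
    obtain ⟨a, ha⟩ : ∃ a, a ∈ hfin.toFinset := Finset.card_pos.mp (by omega) |>.imp fun _ h => h
    have hcard2 : 1 < (hfin.toFinset.erase a).card := by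
      have := Finset.card_erase_of_mem ha
      omega
    obtain ⟨b, hb, c, hc, hbc⟩ := Finset.one_lt_card.mp hcard2
    have hab : a ≠ b := fun hx => (Finset.mem_erase.mp hb).1 hx.symm
    have hac : a ≠ c := fun hx => (Finset.mem_erase.mp hc).1 hx.symm
    have hadj : ∀ z, z ∈ hfin.toFinset → G.Adj v z := by
      intro z hz
      rw [Set.Finite.mem_toFinset, SimpleGraph.mem_neighborSet] at hz
      exact hz
    exact SCSAux.star_case (hadj a ha) (hadj b (Finset.mem_of_mem_erase hb))
      (hadj c (Finset.mem_of_mem_erase hc)) hab hac hbc
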